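/- arXiv:2410.05980 — 3 statements merged into one kernel-verified Lean document; each statement's English description precedes it below -/
import Mathlib

section
/- Under the zero-one loss, for any α ∈ (r_exp(f; u), 1), the distributionally diverse risk satisfies r_dd(f; γ) ≤ (γ − log((1−α)/(1−r_exp(f; u)))) / (log(α/(1−α)) + log(1/r_exp(f; u) − 1)). -/
open MeasureTheory Real Set Classical

lemma key_ineq (a b Z : ℝ) (ha : 0 ≤ a) (hb : 0 < b) (hZ : 0 < Z) :
    a * log b + a * log (1 / a) ≤ a * log Z + b / Z - a := by
  rcases ha.eq_or_lt with rfl | h0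
  · simp only [zero_mul, zero_add, add_zero, zero_sub, sub_zero]
    positivity
  · have ht : 0 < b / (a * Z) := by positivity
    have h1 := Real.log_le_sub_one_of_pos ht
    have h2 : log (b / (a * Z)) = log b - (log a + log Z) := by
      rw [Real.log_div hb.ne' (by positivity), Real.log_mul h0.ne' hZ.ne']
    have h3 : log (1 / a) = - log a := by rw [one_div, Real.log_inv]
    have h4 : a * (b / (a * Z) - 1) = b / Z - a := by field_simp
    nlinarith [mul_le_mul_of_nonneg_left h1 h0.le]

/-- Under the zero-one loss, for any `α ∈ (r_exp(f;u), 1)`, the distributionally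
diverse risk satisfies
`r_dd(f;γ) ≤ (γ − log((1−α)/(1−r_u))) / (log(α/(1−α)) + log(1/r_u − 1))`,
where `r_u = r_exp(f; u)` is the uniform expected risk. -/
theorem dd_risk_tangent_bound
    {X Y : Type*} [MeasurableSpace X] (μ : Measure X) [IsFiniteMeasure μ]
    (hμ : 0 < (μ univ).toReal)
    (f fstar : X → Y) (γ : ℝ) (hγ : 0 ≤ γ) (α : ℝ)
    (ru : ℝ)
    (hru : ru = ∫ x, (1 / (μ univ).toReal) * (if f x = fstar x then (0:ℝ) else 1) ∂μ)
    (hru0 : 0 < ru) (hru2 : ru < 1 / 2)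
    (hα : α ∈ Ioo ru 1)
    (q : X → ℝ) (hq : Measurable q) (hq0 : ∀ x, 0 ≤ q x)
    (hq1 : ∫ x, q x ∂μ = 1)
    (hqint : Integrable (fun x => q x * log (1 / q x)) μ)
    (hqrisk : Integrable (fun x => q x * (if f x = fstar x then (0:ℝ) else 1)) μ)
    (hent : log (μ univ).toReal - γ ≤ ∫ x, q x * log (1 / q x) ∂μ) :
    (∫ x, q x * (if f x = fstar x then (0:ℝ) else 1) ∂μ)
      ≤ (γ - log ((1 - α) / (1 - ru)))
          / (log (α / (1 - α)) + log (1 / ru - 1)) := by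
  classical
  set M := (μ univ).toReal with hM
  set ℓ : X → ℝ := fun x => if f x = fstar x then (0:ℝ) else 1 with hℓ
  have hα0 : 0 < α := lt_trans hru0 hα.1
  have hα1 : α < 1 := hα.2
  have h1α : 0 < 1 - α := by linarith
  have hru1 : ru < 1 := by linarith
  have h1ru : 0 < 1 - ru := by linarith
  have hM0 : 0 < M := hμ
  -- integrability of q
  have hqInt : Integrable q μ := by
    by_contra h
    rw [integral_undef h] at hq1
    norm_num at hq1
  -- integrability of ℓ
  have hℓInt : Integrable ℓ μ := by
    by_contra h
    have h' : ¬ Integrable (fun x => (1 / M) * ℓ x) μ := by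
      intro h''
      have h3 := h''.const_mul M
      apply h
      have heq : (fun x => M * ((1 / M) * ℓ x)) = ℓ := by
        funext x; field_simp
      rwa [heq] at h3
    rw [integral_undef h'] at hru
    exact absurd hru hru0.ne'
  -- value of ∫ ℓ
  have hintl : ∫ x, ℓ x ∂μ = M * ru := by
    have : ru = (1 / M) * ∫ x, ℓ x ∂μ := by
      rw [hru, ← integral_const_mul]
    rw [this]; field_simp
  -- the tangent slope λ
  set lam := log (α / (1 - α)) + log (1 / ru - 1) with hlamdef
  have h1r : 0 < 1 / ru - 1 := by
    have : 1 < 1 / ru := (one_lt_div hru0).mpr hru1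
    linarith
  have hfrac : (α / (1 - α)) * (1 / ru - 1) = (α * (1 - ru)) / ((1 - α) * ru) := by
    field_simp
  have hfracpos : 0 < (α * (1 - ru)) / ((1 - α) * ru) := by positivity
  have hfrac1 : 1 < (α * (1 - ru)) / ((1 - α) * ru) := by
    rw [lt_div_iff₀ (by positivity)]
    nlinarith [hα.1]
  have hlam_eq : lam = log ((α * (1 - ru)) / ((1 - α) * ru)) := by
    rw [hlamdef, ← Real.log_mul (by positivity) h1r.ne', hfrac]
  have hlam0 : 0 < lam := by rw [hlam_eq]; exact Real.log_pos hfrac1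
  have hexplam : Real.exp lam = (α * (1 - ru)) / ((1 - α) * ru) := by
    rw [hlam_eq, Real.exp_log hfracpos]
  have hexp1 : 1 < Real.exp lam := by
    have := Real.add_one_le_exp lam; linarith
  -- the Gibbs weight c
  set c : X → ℝ := fun x => 1 + (Real.exp lam - 1) * ℓ x with hc
  have hcpos : ∀ x, 0 < c x := by
    intro x
    by_cases h : f x = fstar x <;> simp [hc, hℓ, h] <;> linarith
  have hcInt : Integrable c μ := (integrable_const (1:ℝ)).add (hℓInt.const_mul _)
  set Z := M * ((1 - ru) + ru * Real.exp lam) with hZ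
  have hZint : ∫ x, c x ∂μ = Z := by
    have h1 : ∫ x, c x ∂μ = (∫ _x, (1:ℝ) ∂μ) + ∫ x, (Real.exp lam - 1) * ℓ x ∂μ :=
      integral_add (integrable_const (1:ℝ)) (hℓInt.const_mul _)
    rw [h1, integral_const, integral_const_mul, hintl]
    simp only [smul_eq_mul, mul_one, measureReal_def, ← hM]
    rw [hZ]; ring
  have hZpos : 0 < Z := by
    have hs : 0 < (1 - ru) + ru * Real.exp lam := by nlinarith [Real.exp_pos lam]
    exact mul_pos hM0 hs
  have hZval : Z = M * ((1 - ru) / (1 - α)) := by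
    rw [hZ, hexplam]; field_simp; ring
  -- pointwise inequality
  have hpt : ∀ x, q x * (lam * ℓ x) + q x * log (1 / q x)
      ≤ q x * log Z + c x / Z - q x := by
    intro x
    have hlc : lam * ℓ x = log (c x) := by
      by_cases h : f x = fstar x
      · simp [hℓ, hc, h]
      · have hc1 : c x = Real.exp lam := by simp [hℓ, hc, h]
        simp [hℓ, h, hc1, Real.log_exp]
    rw [hlc]
    exact key_ineq (q x) (c x) Z (hq0 x) (hcpos x) hZpos
  -- integrability of both sides
  have hA : Integrable (fun x => q x * (lam * ℓ x)) μ := by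
    have heq : (fun x => q x * (lam * ℓ x)) = fun x => lam * (q x * ℓ x) := by
      funext x; ring
    rw [heq]
    exact hqrisk.const_mul lam
  have hF : Integrable (fun x => q x * (lam * ℓ x) + q x * log (1 / q x)) μ :=
    hA.add hqint
  have hG : Integrable (fun x => q x * log Z + c x / Z - q x) μ :=
    ((hqInt.mul_const (log Z)).add (hcInt.div_const Z)).sub hqInt
  have hint_le : ∫ x, (q x * (lam * ℓ x) + q x * log (1 / q x)) ∂μ
      ≤ ∫ x, (q x * log Z + c x / Z - q x) ∂μ := integral_mono hF hG hpt
  -- compute LHS integral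
  have hLHS : ∫ x, (q x * (lam * ℓ x) + q x * log (1 / q x)) ∂μ
      = lam * (∫ x, q x * ℓ x ∂μ) + ∫ x, q x * log (1 / q x) ∂μ := by
    rw [integral_add hA hqint]
    congr 1
    have heq : (fun x => q x * (lam * ℓ x)) = fun x => lam * (q x * ℓ x) := by
      funext x; ring
    rw [heq, integral_const_mul]
  -- compute RHS integral
  have hG1 : Integrable (fun x => q x * log Z + c x / Z) μ :=
    (hqInt.mul_const (log Z)).add (hcInt.div_const Z)
  have hG2 : Integrable (fun x => q x * log Z) μ := hqInt.mul_const (log Z)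
  have hG3 : Integrable (fun x => c x / Z) μ := hcInt.div_const Z
  have hRHS : ∫ x, (q x * log Z + c x / Z - q x) ∂μ = log Z := by
    rw [integral_sub hG1 hqInt, integral_add hG2 hG3,
      integral_mul_const, integral_div, hq1, hZint]
    field_simp; ring
  rw [hLHS, hRHS] at hint_le
  -- log Z in terms of the target
  have hlogZ : log Z = log M - log ((1 - α) / (1 - ru)) := by
    rw [hZval, Real.log_mul hM0.ne' (by positivity),
      Real.log_div h1ru.ne' h1α.ne', Real.log_div h1α.ne' h1ru.ne']
    ring
  have hmain : lam * (∫ x, q x * ℓ x ∂μ) ≤ γ - log ((1 - α) / (1 - ru)) := by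
    have hH := hent
    rw [hlogZ] at hint_le
    linarith
  -- conclude
  have hgoal : (∫ x, q x * ℓ x ∂μ) ≤ (γ - log ((1 - α) / (1 - ru))) / lam := by
    rw [le_div_iff₀ hlam0]
    linarith
  exact hgoal
end

section
/- Under the zero-one loss, the distributionally diverse risk satisfies the simplified bound r_dd(f; γ) ≤ (γ + log 2) / (−log r_exp(f; u)), provided r_exp(f; u) ∈ (0,1). In particular r_dd(f; γ) → 0 as r_exp(f; u) → 0 for any fixed γ. -/
open MeasureTheory Real Set Classical

/-- Under the zero-one loss, the simplified bound
`r_dd(f;γ) ≤ (γ + log 2) / (−log r_exp(f;u))` holds whenever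
`r_exp(f;u) ∈ (0,1)`. -/
theorem dd_risk_log_bound
    {X Y : Type*} [MeasurableSpace X] (μ : Measure X) [IsFiniteMeasure μ]
    (hμ : 0 < (μ univ).toReal)
    (f fstar : X → Y) (γ : ℝ) (hγ : 0 ≤ γ)
    (ru : ℝ)
    (hru : ru = ∫ x, (1 / (μ univ).toReal) * (if f x = fstar x then (0:ℝ) else 1) ∂μ)
    (hru' : ru ∈ Ioo (0:ℝ) 1)
    (q : X → ℝ) (hq : Measurable q) (hq0 : ∀ x, 0 ≤ q x)
    (hq1 : ∫ x, q x ∂μ = 1)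
    (hqint : Integrable (fun x => q x * log (1 / q x)) μ)
    (hqrisk : Integrable (fun x => q x * (if f x = fstar x then (0:ℝ) else 1)) μ)
    (hent : log (μ univ).toReal - γ ≤ ∫ x, q x * log (1 / q x) ∂μ) :
    (∫ x, q x * (if f x = fstar x then (0:ℝ) else 1) ∂μ)
      ≤ (γ + log 2) / (-log ru) := by
  classical
  obtain ⟨hru0, hru1⟩ := hru'
  set M := (μ univ).toReal with hM
  set g : X → ℝ := fun x => if f x = fstar x then (0:ℝ) else 1 with hgdef
  have hg01 : ∀ x, g x = 0 ∨ g x = 1 := by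
    intro x; by_cases h : f x = fstar x <;> simp [hgdef, h]
  -- q is integrable
  have hqint_q : Integrable q μ := by
    by_contra h
    rw [integral_undef h] at hq1
    norm_num at hq1
  -- g is integrable
  have hgint : Integrable g μ := by
    have h1 : Integrable (fun x => (1 / M) * g x) μ := by
      by_contra h
      rw [integral_undef h] at hru
      rw [hru] at hru0
      norm_num at hru0
    have h2 := h1.const_mul M
    have : (fun x => M * ((1 / M) * g x)) = g := by
      funext x; field_simp
    rwa [this] at h2
  -- measurable version of the error set
  have hgaem : AEStronglyMeasurable g μ := hgint.aestronglyMeasurable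
  set g' := hgaem.mk g with hg'def
  set B : Set X := g' ⁻¹' {1} with hBdef
  have hB : MeasurableSet B :=
    hgaem.stronglyMeasurable_mk.measurable (measurableSet_singleton 1)
  have haeg : ∀ᵐ x ∂μ, g x = g' x := hgaem.ae_eq_mk
  have haeind : ∀ᵐ x ∂μ, B.indicator (fun _ => (1:ℝ)) x = g x := by
    filter_upwards [haeg] with x hx
    by_cases hxB : x ∈ B
    · have : g' x = 1 := hxB
      simp [indicator_of_mem hxB, hx, this]
    · have h1 : g' x ≠ 1 := hxB
      rcases hg01 x with h0 | h0
      · simp [indicator_of_notMem hxB, h0]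
      · exact absurd (hx ▸ h0 : g' x = 1) h1
  -- μ B in real terms
  set a := (μ B).toReal with hadef
  set b := (μ Bᶜ).toReal with hbdef
  have hga : ∫ x, g x ∂μ = a := by
    have he : ∫ x, g x ∂μ = ∫ x, B.indicator (fun _ => (1:ℝ)) x ∂μ :=
      integral_congr_ae (by filter_upwards [haeind] with x hx; exact hx.symm)
    rw [he, integral_indicator_const (1:ℝ) hB]
    simp [hadef, Measure.real]
  have hruM : a = ru * M := by
    have : ru = (1 / M) * ∫ x, g x ∂μ := by
      rw [hru, integral_const_mul]
    rw [hga] at this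
    rw [this]; field_simp
  have ha : 0 < a := by rw [hruM]; positivity
  have hbMa : b = M - a := by
    have hc : μ Bᶜ = μ univ - μ B := measure_compl hB (measure_ne_top μ B)
    rw [hbdef, hc, ENNReal.toReal_sub_of_le (measure_mono (subset_univ B))
      (measure_ne_top μ univ)]
  have haM : a < M := by
    rw [hruM]
    nlinarith
  have hb : 0 < b := by rw [hbMa]; linarith
  -- the comparison density w
  set c1 := 1 / (2 * a) with hc1def
  set c2 := 1 / (2 * b) with hc2def
  have hc1 : 0 < c1 := by positivity
  have hc2 : 0 < c2 := by positivity
  set w : X → ℝ := fun x =>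
    B.indicator (fun _ => c1) x + Bᶜ.indicator (fun _ => c2) x with hwdef
  have hw_mem : ∀ x ∈ B, w x = c1 := by
    intro x hx
    simp [hwdef, indicator_of_mem hx, indicator_of_notMem (by simpa using hx : x ∉ Bᶜ)]
  have hw_not : ∀ x ∉ B, w x = c2 := by
    intro x hx
    simp [hwdef, indicator_of_notMem hx, indicator_of_mem (by simpa using hx : x ∈ Bᶜ)]
  have hw_pos : ∀ x, 0 < w x := by
    intro x
    by_cases hx : x ∈ B
    · rw [hw_mem x hx]; exact hc1
    · rw [hw_not x hx]; exact hc2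
  have hwint : Integrable w μ :=
    ((integrable_const c1).indicator hB).add ((integrable_const c2).indicator hB.compl)
  have hcompl : (μ Bᶜ).toReal = b := rfl
  have hwI : ∫ x, w x ∂μ = 1 := by
    rw [hwdef]
    rw [integral_add ((integrable_const c1).indicator hB)
      ((integrable_const c2).indicator hB.compl)]
    rw [integral_indicator_const c1 hB, integral_indicator_const c2 hB.compl]
    simp only [smul_eq_mul, Measure.real, ← hadef, hcompl]
    rw [hc1def, hc2def]
    field_simp
    ring
  -- the integrals of q over B and Bᶜ
  have hqB : Integrable (B.indicator q) μ := hqint_q.indicator hB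
  have hqBc : Integrable (Bᶜ.indicator q) μ := hqint_q.indicator hB.compl
  set r := ∫ x, B.indicator q x ∂μ with hrdef
  have hsplit : ∀ x, B.indicator q x + Bᶜ.indicator q x = q x := by
    intro x
    by_cases hx : x ∈ B
    · simp [indicator_of_mem hx, indicator_of_notMem (by simpa using hx : x ∉ Bᶜ)]
    · simp [indicator_of_notMem hx, indicator_of_mem (by simpa using hx : x ∈ Bᶜ)]
  have hrc : ∫ x, Bᶜ.indicator q x ∂μ = 1 - r := by
    have := integral_add hqB hqBc
    simp only [hsplit] at this
    rw [hq1] at this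
    linarith [this]
  have hr0 : 0 ≤ r := by
    apply integral_nonneg
    intro x
    exact indicator_nonneg (fun y _ => hq0 y) x
  have hr1 : r ≤ 1 := by
    rw [← hq1]
    apply integral_mono hqB hqint_q
    intro x
    exact indicator_le_self' (fun y _ => hq0 y) x
  -- the target equals r
  have htarget : ∫ x, q x * g x ∂μ = r := by
    rw [hrdef]
    apply integral_congr_ae
    filter_upwards [haeind] with x hx
    by_cases hxB : x ∈ B
    · have : g x = 1 := by rw [← hx, indicator_of_mem hxB]
      simp [this, indicator_of_mem hxB]
    · have : g x = 0 := by rw [← hx, indicator_of_notMem hxB]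
      simp [this, indicator_of_notMem hxB]
  -- q * log (1/w) expressed via indicators
  have hqlw : (fun x => q x * log (1 / w x)) =
      fun x => B.indicator q x * log (2 * a) + Bᶜ.indicator q x * log (2 * b) := by
    funext x
    by_cases hx : x ∈ B
    · rw [hw_mem x hx]
      simp [indicator_of_mem hx, indicator_of_notMem (by simpa using hx : x ∉ Bᶜ),
        hc1def, one_div, inv_inv]
    · rw [hw_not x hx]
      simp [indicator_of_notMem hx, indicator_of_mem (by simpa using hx : x ∈ Bᶜ),
        hc2def, one_div, inv_inv]
  have hqlwint : Integrable (fun x => q x * log (1 / w x)) μ := by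
    rw [hqlw]
    exact (hqB.mul_const _).add (hqBc.mul_const _)
  have hqlwI : ∫ x, q x * log (1 / w x) ∂μ = r * log (2 * a) + (1 - r) * log (2 * b) := by
    rw [hqlw, integral_add (hqB.mul_const _) (hqBc.mul_const _),
      integral_mul_const, integral_mul_const, hrc]
  -- Gibbs pointwise inequality
  have hpt : ∀ x, q x * log (1 / q x) ≤ q x * log (1 / w x) + (w x - q x) := by
    intro x
    rcases eq_or_lt_of_le (hq0 x) with h0 | h0
    · rw [← h0]
      simp [le_of_lt (hw_pos x)]
    · have hwx := hw_pos x
      have ht : 0 < w x / q x := by positivity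
      have hlog := Real.log_le_sub_one_of_pos ht
      have hld : log (w x / q x) = log (w x) - log (q x) := Real.log_div (ne_of_gt hwx) (ne_of_gt h0)
      have h1 : q x * log (w x / q x) ≤ w x - q x := by
        have := mul_le_mul_of_nonneg_left hlog (le_of_lt h0)
        calc q x * log (w x / q x) ≤ q x * (w x / q x - 1) := this
          _ = w x - q x := by field_simp
      have e1 : log (1 / q x) = - log (q x) := by rw [one_div, Real.log_inv]
      have e2 : log (1 / w x) = - log (w x) := by rw [one_div, Real.log_inv]
      have h2 : q x * (log (w x) - log (q x)) ≤ w x - q x := by rwa [hld] at h1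
      rw [e1, e2]
      nlinarith [h2]
  -- integrate
  have hwq : Integrable (fun x => w x - q x) μ := hwint.sub hqint_q
  have hint : ∫ x, q x * log (1 / q x) ∂μ ≤ r * log (2 * a) + (1 - r) * log (2 * b) := by
    calc ∫ x, q x * log (1 / q x) ∂μ
        ≤ ∫ x, (q x * log (1 / w x) + (w x - q x)) ∂μ := by
          apply integral_mono hqint (hqlwint.add hwq) hpt
      _ = (∫ x, q x * log (1 / w x) ∂μ) + ((∫ x, w x ∂μ) - ∫ x, q x ∂μ) := by
          rw [integral_add hqlwint hwq, integral_sub hwint hqint_q]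
      _ = r * log (2 * a) + (1 - r) * log (2 * b) := by
          rw [hqlwI, hwI, hq1]; ring
  -- logarithm computations
  have hla : log (2 * a) = log 2 + log ru + log M := by
    rw [hruM, Real.log_mul (by norm_num) (by positivity),
      Real.log_mul (ne_of_gt hru0) (ne_of_gt hμ)]
    ring
  have hlb : log (2 * b) ≤ log 2 + log M := by
    have h2M : log (2 * M) = log 2 + log M := Real.log_mul (by norm_num) (ne_of_gt hμ)
    rw [← h2M]
    exact Real.log_le_log (by linarith) (by linarith)
  have hlogru : log ru < 0 := Real.log_neg hru0 hru1
  -- combine everything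
  have hkey : r * (- log ru) ≤ γ + log 2 := by
    have h1 : log M - γ ≤ r * (log 2 + log ru + log M) + (1 - r) * (log 2 + log M) := by
      calc log M - γ ≤ ∫ x, q x * log (1 / q x) ∂μ := hent
        _ ≤ r * log (2 * a) + (1 - r) * log (2 * b) := hint
        _ ≤ r * (log 2 + log ru + log M) + (1 - r) * (log 2 + log M) := by
            rw [hla]
            have := mul_le_mul_of_nonneg_left hlb (by linarith : (0:ℝ) ≤ 1 - r)
            linarith
    have h2 : r * (log 2 + log ru + log M) + (1 - r) * (log 2 + log M)
        = log 2 + log M + r * log ru := by ring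
    have h3 : r * (- log ru) = -(r * log ru) := by ring
    linarith
  have hpos : 0 < - log ru := by linarith
  have htarget' : (∫ x, q x * (if f x = fstar x then (0:ℝ) else 1) ∂μ) = r := htarget
  rw [htarget', le_div_iff₀ hpos]
  exact hkey
end

section
/- Suppose the expected risk under the uniform distribution satisfies r_exp(f; u) < e^{−γ}. Then the distributionally diverse risk r_dd(f; γ) is strictly less than 1. Conversely, if log(vol(E)) ≥ H(u) − γ (equivalently r_exp(f; u) ≥ e^{−γ}), then r_dd(f; γ) = 1. -/
open MeasureTheory Real Set

lemma aux_neg_mul_log_le (x b : ℝ) (hx : 0 ≤ x) :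
    x * Real.log (1 / x) ≤ b * x + Real.exp (-1 - b) := by
  rcases hx.eq_or_lt with h | h
  · simp [← h]
    positivity
  · have hpos : 0 < Real.exp (-1 - b) / x := by positivity
    have hlog := Real.log_le_sub_one_of_pos hpos
    rw [Real.log_div (Real.exp_ne_zero _) (ne_of_gt h), Real.log_exp] at hlog
    rw [one_div, Real.log_inv]
    have hc : x * (Real.exp (-1 - b) / x) = Real.exp (-1 - b) :=
      mul_div_cancel₀ _ h.ne'
    nlinarith [mul_le_mul_of_nonneg_left hlog h.le]

lemma aux_setIntegral_entropy_le {X : Type*} [MeasurableSpace X] (μ : Measure X)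
    [IsFiniteMeasure μ] {A : Set X} (hA : MeasurableSet A) {q : X → ℝ}
    (hq0 : ∀ x, 0 ≤ q x) (hqi : Integrable q μ)
    (hqe : Integrable (fun x => q x * Real.log (1 / q x)) μ) (b : ℝ) :
    (∫ x in A, q x * Real.log (1 / q x) ∂μ)
      ≤ b * (∫ x in A, q x ∂μ) + Real.exp (-1 - b) * (μ A).toReal := by
  have hconst : IntegrableOn (fun _ : X => Real.exp (-1 - b)) A μ :=
    integrableOn_const (measure_ne_top μ A)
  have h1 : (∫ x in A, q x * Real.log (1 / q x) ∂μ)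
      ≤ ∫ x in A, (b * q x + Real.exp (-1 - b)) ∂μ := by
    apply setIntegral_mono_on hqe.integrableOn
      ((hqi.integrableOn.const_mul b).add hconst) hA
    intro x _
    exact aux_neg_mul_log_le (q x) b (hq0 x)
  refine h1.trans_eq ?_
  rw [integral_add (hqi.integrableOn.const_mul b) hconst, integral_const_mul,
    setIntegral_const, smul_eq_mul, measureReal_def, mul_comm ((μ A).toReal)]

/-- If the uniform risk `vol(E)/vol(X)` is below `e^{−γ}`, the distributionally
diverse risk (sup of `q(E)` over densities with entropy `≥ H(u) − γ`) is
strictly below 1; conversely if `log vol(E) ≥ H(u) − γ` it equals 1. -/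
theorem dd_risk_lt_one_iff_small_uniform_risk
    {X : Type*} [MeasurableSpace X] (μ : Measure X) [IsFiniteMeasure μ]
    (E : Set X) (hE : MeasurableSet E)
    (hvE : 0 < (μ E).toReal) (hvEc : 0 < (μ Eᶜ).toReal)
    (γ : ℝ) (hγ : 0 ≤ γ) :
    ((μ E).toReal / (μ univ).toReal < Real.exp (-γ) →
      ∃ c < (1:ℝ), ∀ q : X → ℝ, Measurable q → (∀ x, 0 ≤ q x) →
        (∫ x, q x ∂μ) = 1 →
        Integrable (fun x => q x * log (1 / q x)) μ →
        log (μ univ).toReal - γ ≤ (∫ x, q x * log (1 / q x) ∂μ) →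
        (∫ x in E, q x ∂μ) ≤ c) ∧
    (log (μ univ).toReal - γ ≤ log (μ E).toReal →
      ∃ q : X → ℝ, Measurable q ∧ (∀ x, 0 ≤ q x) ∧
        (∫ x, q x ∂μ) = 1 ∧
        Integrable (fun x => q x * log (1 / q x)) μ ∧
        log (μ univ).toReal - γ ≤ (∫ x, q x * log (1 / q x) ∂μ) ∧
        (∫ x in E, q x ∂μ) = 1) := by
  set vE : ℝ := (μ E).toReal with hvEdef
  set vC : ℝ := (μ Eᶜ).toReal with hvCdef
  set vX : ℝ := (μ univ).toReal with hvXdef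
  have hvX : 0 < vX := lt_of_lt_of_le hvE
    (ENNReal.toReal_mono (measure_ne_top μ univ) (measure_mono (subset_univ E)))
  constructor
  · -- Part 1
    intro hu
    set L : ℝ := Real.log vX - γ with hLdef
    set a : ℝ := Real.log vE with hadef
    set d : ℝ := Real.log vC with hddef
    have haL : a < L := by
      have h1 : vE < Real.exp (-γ) * vX := (div_lt_iff₀ hvX).mp hu
      have h2 : Real.log vE < Real.log (Real.exp (-γ) * vX) := Real.log_lt_log hvE h1
      rwa [Real.log_mul (Real.exp_ne_zero _) hvX.ne', Real.log_exp, neg_add_eq_sub] at h2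
    set δ : ℝ := L - a with hδdef
    have hδ : 0 < δ := by simp [hδdef]; linarith
    set s : ℝ := max (L - d + 1) (Real.log (2 / δ) - 1) with hsdef
    set P : ℝ := d + s - L with hPdef
    have hP : 1 ≤ P := by
      have := le_max_left (L - d + 1) (Real.log (2 / δ) - 1)
      simp only [hPdef, hsdef]; linarith
    have hexps : Real.exp (-1 - s) ≤ δ / 2 := by
      have h1 : Real.log (2 / δ) - 1 ≤ s := le_max_right _ _
      have h2 : Real.exp (-1 - s) ≤ Real.exp (-Real.log (2 / δ)) := by
        apply Real.exp_le_exp.2; linarith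
      have h3 : Real.exp (-Real.log (2 / δ)) = δ / 2 := by
        rw [Real.exp_neg, Real.exp_log (by positivity)]
        rw [inv_div]
      linarith
    refine ⟨(1 + Real.exp (-1 - s) + P) / (P + δ + 1), ?_, ?_⟩
    · rw [div_lt_one (by positivity)]
      have := Real.exp_pos (-1 - s)
      linarith
    · intro q hqm hq0 hqint hqe hH
      have hqi : Integrable q μ := by
        by_contra hni
        rw [integral_undef hni] at hqint
        norm_num at hqint
      set t : ℝ := ∫ x in E, q x ∂μ with htdef
      have hsplit : t + (∫ x in Eᶜ, q x ∂μ) = 1 := by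
        rw [htdef, integral_add_compl hE hqi, hqint]
      have hHsplit : (∫ x, q x * Real.log (1 / q x) ∂μ)
          = (∫ x in E, q x * Real.log (1 / q x) ∂μ)
            + (∫ x in Eᶜ, q x * Real.log (1 / q x) ∂μ) :=
        (integral_add_compl hE hqe).symm
      have hb1 := aux_setIntegral_entropy_le μ hE hq0 hqi hqe (a - 1)
      have hb2 := aux_setIntegral_entropy_le μ hE.compl hq0 hqi hqe (d + s)
      have he1 : Real.exp (-1 - (a - 1)) * vE = 1 := by
        have : Real.exp (-1 - (a - 1)) = vE⁻¹ := by
          rw [show (-1 - (a - 1)) = -a by ring, Real.exp_neg, hadef, Real.exp_log hvE]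
        rw [this, inv_mul_cancel₀ hvE.ne']
      have he2 : Real.exp (-1 - (d + s)) * vC = Real.exp (-1 - s) := by
        have : Real.exp (-1 - (d + s)) = Real.exp (-1 - s) * vC⁻¹ := by
          rw [show (-1 - (d + s)) = (-1 - s) + (-d) by ring, Real.exp_add, Real.exp_neg,
            hddef, Real.exp_log hvEc]
        rw [this, mul_assoc, inv_mul_cancel₀ hvEc.ne', mul_one]
      rw [he1] at hb1
      rw [he2] at hb2
      -- main chain: L ≤ H ≤ (a-1)t + 1 + (d+s)(1-t) + exp(-1-s)
      rw [le_div_iff₀ (by positivity)]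
      have hHle : L ≤ (a - 1) * t + 1 + (d + s) * (1 - t) + Real.exp (-1 - s) := by
        have h1 : L ≤ (∫ x, q x * Real.log (1 / q x) ∂μ) := hH
        have h2 : (∫ x in Eᶜ, q x ∂μ) = 1 - t := by linarith
        rw [hHsplit] at h1
        rw [h2] at hb2
        linarith
      nlinarith [hHle]
  · -- Part 2
    intro hle
    refine ⟨E.indicator (fun _ => vE⁻¹), (measurable_const).indicator hE, ?_, ?_, ?_, ?_, ?_⟩
    · intro x
      exact Set.indicator_nonneg (fun _ _ => by positivity) x
    · rw [integral_indicator_const _ hE, smul_eq_mul, measureReal_def, ← hvEdef, mul_inv_cancel₀ hvE.ne']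
    · have heq : (fun x => E.indicator (fun _ => vE⁻¹) x
          * Real.log (1 / E.indicator (fun _ => vE⁻¹) x))
          = E.indicator (fun _ => vE⁻¹ * Real.log vE) := by
        funext x
        by_cases hx : x ∈ E
        · simp only [Set.indicator_of_mem hx, one_div, inv_inv]
        · simp [Set.indicator_of_notMem hx]
      rw [heq]
      exact (integrable_const _).indicator hE
    · have heq : (fun x => E.indicator (fun _ => vE⁻¹) x
          * Real.log (1 / E.indicator (fun _ => vE⁻¹) x))
          = E.indicator (fun _ => vE⁻¹ * Real.log vE) := by
        funext x
        by_cases hx : x ∈ E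
        · simp only [Set.indicator_of_mem hx, one_div, inv_inv]
        · simp [Set.indicator_of_notMem hx]
      rw [heq, integral_indicator_const _ hE, smul_eq_mul, measureReal_def, ← hvEdef, ← mul_assoc,
        mul_inv_cancel₀ hvE.ne', one_mul]
      exact hle
    · rw [setIntegral_indicator hE, Set.inter_self, setIntegral_const, smul_eq_mul, measureReal_def, ← hvEdef,
        mul_inv_cancel₀ hvE.ne']
end
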